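/- Let q = 2^m with m odd. Then Σ_{x ∈ GF(q)} (-1)^{Tr(x^3 + x)} = (-1)^{(m²-1)/8} · 2^{(m+1)/2}, where Tr is the trace from GF(2^m) to GF(2). -/

import Mathlib

set_option linter.unusedSectionVars false
set_option linter.unusedVariables false
set_option maxHeartbeats 1000000
open Finset WeierstrassCurve
open scoped Classical

namespace Stmt7Proof

section
variable {F : Type} [Field F] [Fintype F] [Algebra (ZMod 2) F]


lemma charF : CharP F 2 := charP_of_injective_algebraMap (algebraMap (ZMod 2) F).injective 2

noncomputable def frobAE : F ≃ₐ[ZMod 2] F := by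
  haveI := charF (F := F)
  refine AlgEquiv.ofBijective
    { toRingHom := frobenius F 2,
      commutes' := ?_ }
    ((Finite.injective_iff_bijective).mp (frobenius F 2).injective)
  intro r
  show (algebraMap (ZMod 2) F r) ^ 2 = algebraMap (ZMod 2) F r
  rw [← map_pow]
  congr 1
  revert r; decide

lemma frobAE_apply (x : F) : frobAE x = x ^ 2 := rfl

lemma trace_sq (x : F) :
    Algebra.trace (ZMod 2) F (x ^ 2) = Algebra.trace (ZMod 2) F x := by
  rw [← frobAE_apply, Algebra.trace_eq_of_algEquiv]

lemma trace_one_f (m : ℕ) (hm : Odd m) (hcard : Fintype.card F = 2 ^ m) :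
    Algebra.trace (ZMod 2) F 1 = 1 := by
  have h1 : Fintype.card F = 2 ^ (Module.finrank (ZMod 2) F) := by
    simpa using Module.card_eq_pow_finrank (K := ZMod 2) (V := F)
  have hfr : Module.finrank (ZMod 2) F = m :=
    Nat.pow_right_injective (le_refl 2) (h1.symm.trans hcard)
  have := Algebra.trace_algebraMap (R := ZMod 2) (S := F) 1
  rw [map_one] at this
  rw [this, hfr, nsmul_eq_mul, mul_one]
  have : ((m : ℕ) : ZMod 2) = ((m % 2 : ℕ) : ZMod 2) := (ZMod.natCast_mod m 2).symm
  rw [this, Nat.odd_iff.mp hm]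
  norm_num


noncomputable def ch (x : F) : ℤ := (-1) ^ (Algebra.trace (ZMod 2) F x).val

lemma ch_add (x y : F) : ch (x + y) = ch x * ch y := by
  unfold ch
  rw [map_add]
  have : ∀ a b : ZMod 2, ((-1:ℤ)) ^ (a+b).val = (-1)^a.val * (-1)^b.val := by decide
  exact this _ _

lemma ch_zero : ch (0 : F) = 1 := by simp [ch]

lemma ch_congr {a b : F} (h : Algebra.trace (ZMod 2) F a = Algebra.trace (ZMod 2) F b) :
    ch a = ch b := by unfold ch; rw [h]

lemma ch_one (h1 : Algebra.trace (ZMod 2) F 1 = 1) : ch (1 : F) = -1 := by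
  rw [ch, h1]; decide

lemma sum_ch_eq_zero (c : F) (hc : c ≠ 0) (h1 : Algebra.trace (ZMod 2) F 1 = 1) :
    ∑ u : F, ch (u * c) = 0 := by
  have key : ∑ u : F, ch ((u + c⁻¹) * c) = ∑ u : F, ch (u * c) :=
    Fintype.sum_equiv (Equiv.addRight c⁻¹) _ _ (fun u => rfl)
  have step : ∀ u : F, ch ((u + c⁻¹) * c) = - ch (u * c) := by
    intro u
    have : (u + c⁻¹) * c = u * c + 1 := by
      field_simp
    rw [this, ch_add, ch_one h1]
    ring
  rw [Finset.sum_congr rfl (fun u _ => step u), Finset.sum_neg_distrib] at key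
  linarith

lemma sum_ch_mul (c : F) (h1 : Algebra.trace (ZMod 2) F 1 = 1) :
    ∑ u : F, ch (u * c) = if c = 0 then (Fintype.card F : ℤ) else 0 := by
  split_ifs with h
  · subst h; simp [ch_zero]
  · exact sum_ch_eq_zero c h h1

lemma quartic_root (m : ℕ) (hm : Odd m) (hcard : Fintype.card F = 2 ^ m)
    (z : F) (hz : z ^ 4 = z) : z = 0 ∨ z = 1 := by
  by_cases h0 : z = 0
  · exact Or.inl h0
  right
  have h3 : z ^ 3 = 1 := by
    have : (z ^ 3 - 1) * z = 0 := by
      have : z ^ 4 = z ^ 3 * z := by ring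
      rw [this] at hz
      linear_combination hz
    rcases mul_eq_zero.mp this with h | h
    · exact sub_eq_zero.mp h
    · exact absurd h h0
  have hd3 : orderOf z ∣ 3 := orderOf_dvd_of_pow_eq_one h3
  have hdq : orderOf z ∣ 2 ^ m - 1 := by
    apply orderOf_dvd_of_pow_eq_one
    have := FiniteField.pow_card_sub_one_eq_one z h0
    rwa [hcard] at this
  have hnd : ¬ (3 ∣ 2 ^ m - 1) := by
    intro hdvd
    have hle : 1 ≤ 2 ^ m := Nat.one_le_two_pow
    have : ((2 ^ m - 1 : ℕ) : ZMod 3) = 0 := (ZMod.natCast_eq_zero_iff _ _).mpr hdvd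
    rw [Nat.cast_sub hle] at this
    push_cast at this
    have h2 : (2 : ZMod 3) = -1 := by decide
    rw [h2, Odd.neg_one_pow hm] at this
    revert this; decide
  have hcop : Nat.Coprime 3 (2 ^ m - 1) :=
    (Nat.Prime.coprime_iff_not_dvd Nat.prime_three).mpr hnd
  have : orderOf z ∣ 1 := hcop ▸ Nat.dvd_gcd hd3 hdq
  rw [Nat.dvd_one] at this
  exact orderOf_eq_one_iff.mp this

lemma trace_AS (y : F) : Algebra.trace (ZMod 2) F (y ^ 2 + y) = 0 := by
  rw [map_add, trace_sq]
  exact CharTwo.add_self_eq_zero _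

lemma AS_fiber (c y₀ : F) (h2 : (2:F) = 0) (hy0 : y₀ ^ 2 + y₀ = c) :
    (univ.filter fun y : F => y ^ 2 + y = c) = {y₀, y₀ + 1} := by
  ext y
  simp only [mem_filter, mem_univ, true_and, mem_insert, mem_singleton]
  constructor
  · intro hy
    have hfac : (y - y₀) * (y - y₀ - 1) = 0 := by
      linear_combination hy + hy0 + (c - y - y * y₀) * h2
    rcases mul_eq_zero.mp hfac with h | h
    · left; exact sub_eq_zero.mp h
    · right; exact sub_eq_zero.mp (show y - (y₀ + 1) = 0 by linear_combination h)
  · rintro (rfl | rfl)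
    · exact hy0
    · linear_combination hy0 + (y₀ + 1) * h2

lemma AS_fiber_card (c y₀ : F) (h2 : (2:F) = 0) (hy0 : y₀ ^ 2 + y₀ = c) :
    (univ.filter fun y : F => y ^ 2 + y = c).card = 2 := by
  rw [AS_fiber c y₀ h2 hy0, Finset.card_pair]
  intro h
  exact one_ne_zero (by linear_combination -h : (1:F) = 0)

lemma AS_image (m : ℕ) (hcard : Fintype.card F = 2 ^ m) (h2 : (2:F) = 0)
    (h1 : Algebra.trace (ZMod 2) F 1 = 1) :
    (univ.image (fun y : F => y ^ 2 + y))
      = (univ.filter fun c : F => Algebra.trace (ZMod 2) F c = 0) := by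
  have himg : (univ.image (fun y : F => y ^ 2 + y)).card * 2 = 2 ^ m := by
    have h := Finset.card_eq_sum_card_image (fun y : F => y ^ 2 + y) univ
    rw [Finset.card_univ, hcard] at h
    have h' : ∑ b ∈ univ.image (fun y : F => y ^ 2 + y),
          (univ.filter fun a : F => a ^ 2 + a = b).card
        = ∑ _b ∈ univ.image (fun y : F => y ^ 2 + y), 2 := by
      refine Finset.sum_congr rfl (fun c hc => ?_)
      obtain ⟨y, _, rfl⟩ := Finset.mem_image.mp hc
      exact AS_fiber_card _ y h2 rfl
    rw [h', Finset.sum_const, smul_eq_mul] at h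
    omega
  have hker : (univ.filter fun c : F => Algebra.trace (ZMod 2) F c = 0).card * 2 = 2 ^ m := by
    have hbij : (univ.filter fun c : F => Algebra.trace (ZMod 2) F c = 0).card
        = (univ.filter fun c : F => ¬ (Algebra.trace (ZMod 2) F c = 0)).card := by
      apply Finset.card_nbij' (fun c => c + 1) (fun c => c + 1)
      · intro a ha
        simp only [mem_coe, mem_filter, mem_univ, true_and] at ha ⊢
        rw [map_add, ha, h1]
        decide
      · intro a ha
        simp only [mem_coe, mem_filter, mem_univ, true_and] at ha ⊢
        rw [map_add, h1]
        revert ha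
        generalize (Algebra.trace (ZMod 2) F) a = t
        revert t; decide
      · intro a _
        have : (2 : F) = 0 := h2
        linear_combination this
      · intro a _
        linear_combination h2
    have hsplit := Finset.card_filter_add_card_filter_not
      (s := (univ : Finset F)) (p := fun c : F => Algebra.trace (ZMod 2) F c = 0)
    rw [Finset.card_univ, hcard] at hsplit
    omega
  apply Finset.eq_of_subset_of_card_le
  · intro c hc
    obtain ⟨y, _, rfl⟩ := Finset.mem_image.mp hc
    exact mem_filter.mpr ⟨mem_univ _, trace_AS y⟩
  · omega

lemma fiber_count (m : ℕ) (hcard : Fintype.card F = 2 ^ m) (h2 : (2:F) = 0)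
    (h1 : Algebra.trace (ZMod 2) F 1 = 1) (c : F) :
    ((univ.filter fun y : F => y ^ 2 + y = c).card : ℤ) = 1 + ch c := by
  by_cases htr : Algebra.trace (ZMod 2) F c = 0
  · have hc : c ∈ univ.image (fun y : F => y ^ 2 + y) := by
      rw [AS_image m hcard h2 h1]
      exact mem_filter.mpr ⟨mem_univ _, htr⟩
    obtain ⟨y₀, _, hy0⟩ := Finset.mem_image.mp hc
    rw [AS_fiber_card c y₀ h2 hy0]
    rw [ch, htr]
    decide
  · have htr1 : Algebra.trace (ZMod 2) F c = 1 := by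
      revert htr; generalize (Algebra.trace (ZMod 2) F) c = t; revert t; decide
    have : (univ.filter fun y : F => y ^ 2 + y = c) = ∅ := by
      apply Finset.filter_eq_empty_iff.mpr
      intro y _ hy
      rw [← hy] at htr1
      rw [trace_AS y] at htr1
      exact absurd htr1 (by decide)
    rw [this, ch, htr1]
    simp only [Finset.card_empty, Nat.cast_zero]
    decide

lemma count_N (m : ℕ) (hcard : Fintype.card F = 2 ^ m) (h2 : (2:F) = 0)
    (h1 : Algebra.trace (ZMod 2) F 1 = 1) :
    ((univ.filter fun p : F × F => p.2 ^ 2 + p.2 = p.1 ^ 3 + p.1).card : ℤ)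
      = 2 ^ m + ∑ x : F, ch (x ^ 3 + x) := by
  have hfib := Finset.card_eq_sum_card_fiberwise
    (f := fun p : F × F => p.1)
    (s := univ.filter fun p : F × F => p.2 ^ 2 + p.2 = p.1 ^ 3 + p.1)
    (t := univ) (fun x _ => mem_univ _)
  have hxcard : ∀ x : F,
      (((univ.filter fun p : F × F => p.2 ^ 2 + p.2 = p.1 ^ 3 + p.1).filter
        fun p => p.1 = x).card)
      = (univ.filter fun y : F => y ^ 2 + y = x ^ 3 + x).card := by
    intro x
    apply Finset.card_nbij' (fun p => p.2) (fun y => (x, y))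
    · intro p hp
      simp only [mem_coe, mem_filter, mem_univ, true_and] at hp ⊢
      obtain ⟨h, rfl⟩ := hp
      exact h
    · intro y hy
      simp only [mem_coe, mem_filter, mem_univ, true_and] at hy ⊢
      exact ⟨hy, trivial⟩
    · intro p hp
      simp only [mem_coe, mem_filter] at hp
      obtain ⟨-, rfl⟩ := hp
      rfl
    · intro y _
      rfl
  rw [hfib]
  push_cast
  rw [Finset.sum_congr rfl (fun x _ => congrArg (Nat.cast : ℕ → ℤ) (hxcard x))]
  rw [Finset.sum_congr rfl (fun x _ => fiber_count m hcard h2 h1 (x ^ 3 + x))]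
  rw [Finset.sum_add_distrib, Finset.sum_const, Finset.card_univ, hcard]
  push_cast
  ring

lemma sq_sum (m : ℕ) (hm : Odd m) (hcard : Fintype.card F = 2 ^ m)
    (h1 : Algebra.trace (ZMod 2) F 1 = 1) (h2 : (2:F) = 0) :
    (∑ x : F, ch (x ^ 3 + x)) ^ 2 = 2 ^ (m + 1) := by
  have key : ∀ x z : F, ch (x ^ 3 + x) * ch ((x + z) ^ 3 + (x + z))
      = ch (x ^ 2 * (z + z ^ 4)) * ch (z ^ 3 + z) := by
    intro x z
    rw [← ch_add]
    have hxz : x ^ 3 + x + ((x + z) ^ 3 + (x + z)) = (x ^ 2 * z + x * z ^ 2) + (z ^ 3 + z) := by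
      linear_combination (x ^ 3 + x ^ 2 * z + x * z ^ 2 + x) * h2
    rw [hxz, ch_add]
    congr 1
    apply ch_congr
    have h4 : x ^ 2 * (z + z ^ 4) = x ^ 2 * z + (x * z ^ 2) ^ 2 := by ring
    rw [h4, map_add, map_add, trace_sq]
  calc (∑ x : F, ch (x ^ 3 + x)) ^ 2
      = ∑ x : F, ∑ y : F, ch (x ^ 3 + x) * ch (y ^ 3 + y) := by
        rw [sq, Finset.sum_mul_sum]
    _ = ∑ x : F, ∑ z : F, ch (x ^ 3 + x) * ch ((x + z) ^ 3 + (x + z)) := by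
        refine Finset.sum_congr rfl (fun x _ => ?_)
        exact (Fintype.sum_equiv (Equiv.addLeft x)
          (fun z => ch (x ^ 3 + x) * ch ((x + z) ^ 3 + (x + z)))
          (fun y => ch (x ^ 3 + x) * ch (y ^ 3 + y)) (fun z => rfl)).symm
    _ = ∑ z : F, ∑ x : F, ch (x ^ 2 * (z + z ^ 4)) * ch (z ^ 3 + z) := by
        rw [Finset.sum_comm]
        exact Finset.sum_congr rfl (fun z _ => Finset.sum_congr rfl (fun x _ => key x z))
    _ = ∑ z : F, ch (z ^ 3 + z) * ∑ x : F, ch (x ^ 2 * (z + z ^ 4)) := by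
        refine Finset.sum_congr rfl (fun z _ => ?_)
        rw [Finset.mul_sum]
        exact Finset.sum_congr rfl (fun x _ => mul_comm _ _)
    _ = ∑ z : F, ch (z ^ 3 + z) * (if z + z ^ 4 = 0 then (Fintype.card F : ℤ) else 0) := by
        refine Finset.sum_congr rfl (fun z _ => ?_)
        congr 1
        rw [← sum_ch_mul (z + z ^ 4) h1]
        exact Fintype.sum_equiv (frobAE (F := F)).toEquiv
          (fun x => ch (x ^ 2 * (z + z ^ 4)))
          (fun u => ch (u * (z + z ^ 4)))
          (fun x => by rw [show ((frobAE (F := F)).toEquiv x) = frobAE x from rfl, frobAE_apply])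
          |>.symm ▸ rfl
    _ = 2 ^ (m + 1) := by
        have hmem : ∀ z ∈ (univ : Finset F), z ∉ ({0, 1} : Finset F) →
            ch (z ^ 3 + z) * (if z + z ^ 4 = 0 then (Fintype.card F : ℤ) else 0) = 0 := by
          intro z _ hz
          rw [if_neg, mul_zero]
          intro hzz
          have hz4 : z ^ 4 = z := by linear_combination hzz - z * h2
          rcases quartic_root m hm hcard z hz4 with h | h <;> simp [h] at hz
        rw [← Finset.sum_subset (Finset.subset_univ ({0, 1} : Finset F)) hmem]
        rw [Finset.sum_pair (zero_ne_one)]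
        have e0 : (0 : F) ^ 3 + 0 = 0 := by ring
        have e1 : (1 : F) ^ 3 + 1 = 0 := by linear_combination h2
        have e2 : (0 : F) + 0 ^ 4 = 0 := by ring
        have e3 : (1 : F) + 1 ^ 4 = 0 := by linear_combination h2
        rw [e0, e1, e2, e3, if_pos rfl, ch_zero, hcard]
        push_cast
        ring


def Wc (F : Type) [Field F] : WeierstrassCurve.Affine F :=
  { a₁ := 0, a₂ := 0, a₃ := 1, a₄ := 1, a₆ := 0 }

lemma Wc_equation_iff (x y : F) :
    (Wc F).Equation x y ↔ y ^ 2 + y = x ^ 3 + x := by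
  rw [WeierstrassCurve.Affine.equation_iff]
  show y ^ 2 + 0 * x * y + 1 * y = x ^ 3 + 0 * x ^ 2 + 1 * x + 0 ↔ _
  constructor <;> intro h <;> linear_combination h

lemma Wc_delta (h2 : (2:F) = 0) : (Wc F).Δ ≠ 0 := by
  have : (Wc F).Δ = 1 := by
    rw [WeierstrassCurve.Δ, WeierstrassCurve.b₂, WeierstrassCurve.b₄,
      WeierstrassCurve.b₆, WeierstrassCurve.b₈]
    show -(0^2 + 4*0)^2 * ((0:F)^2*0 + 4*0*0 - 0*1*1 + 0*1^2 - 1^2)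
      - 8*(2*1 + 0*1)^3 - 27*(1^2+4*0)^2 + 9*(0^2+4*0)*(2*1+0*1)*(1^2+4*0) = 1
    linear_combination (-46 : F) * h2
  rw [this]
  exact one_ne_zero

lemma Wc_ns (h2 : (2:F) = 0) (x y : F) (h : y ^ 2 + y = x ^ 3 + x) :
    (Wc F).Nonsingular x y :=
  (WeierstrassCurve.Affine.equation_iff_nonsingular_of_Δ_ne_zero (W := Wc F)
    (Wc_delta h2)).mp ((Wc_equation_iff x y).mpr h)

noncomputable def ptEquiv (h2 : (2:F) = 0) :
    (Wc F).Point ≃ Option {p : F × F // p.2 ^ 2 + p.2 = p.1 ^ 3 + p.1} where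
  toFun P := match P with
    | .zero => none
    | @WeierstrassCurve.Affine.Point.some _ _ _ x y h =>
        some ⟨(x, y), (Wc_equation_iff x y).mp h.1⟩
  invFun o := match o with
    | none => .zero
    | some ⟨(x, y), h⟩ => .some x y (Wc_ns h2 x y h)
  left_inv := by rintro (_ | h) <;> rfl
  right_inv := by rintro (_ | ⟨⟨x, y⟩, h⟩) <;> rfl

lemma some_congr {W : WeierstrassCurve.Affine F} {x₁ y₁ x₂ y₂ : F}
    (hx : x₁ = x₂) (hy : y₁ = y₂) {h₁ : W.Nonsingular x₁ y₁} {h₂ : W.Nonsingular x₂ y₂} :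
    WeierstrassCurve.Affine.Point.some _ _ h₁ = WeierstrassCurve.Affine.Point.some _ _ h₂ := by
  subst hx; subst hy; rfl

lemma ec_dvd (m : ℕ) (hcard : Fintype.card F = 2 ^ m) (h2 : (2:F) = 0) :
    5 ∣ (univ.filter fun p : F × F => p.2 ^ 2 + p.2 = p.1 ^ 3 + p.1).card + 1 := by
  have h01 : (0:F) ≠ 1 := zero_ne_one
  have e00 : (0:F) ^ 2 + 0 = 0 ^ 3 + 0 := by ring
  have e10 : (0:F) ^ 2 + 0 = 1 ^ 3 + 1 := by linear_combination -h2
  have e01 : (1:F) ^ 2 + 1 = 0 ^ 3 + 0 := by linear_combination h2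
  have hP : (Wc F).Nonsingular 0 0 := Wc_ns h2 0 0 e00
  have hQ : (Wc F).Nonsingular 1 0 := Wc_ns h2 1 0 e10
  have hR : (Wc F).Nonsingular 0 1 := Wc_ns h2 0 1 e01
  set P : (Wc F).Point := .some _ _ hP with hPdef
  set Q : (Wc F).Point := .some _ _ hQ with hQdef
  set R : (Wc F).Point := .some _ _ hR with hRdef
  have hnegY : ∀ x y : F, (Wc F).negY x y = y + 1 := by
    intro x y
    show -y - 0 * x - 1 = y + 1
    linear_combination (- y - 1) * h2
  -- P + P = Q
  have h2P : P + P = Q := by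
    have hy : (0:F) ≠ (Wc F).negY 0 0 := by
      rw [hnegY, zero_add]; exact h01
    have hslope : (Wc F).slope 0 0 0 0 = 1 := by
      rw [WeierstrassCurve.Affine.slope_of_Y_ne rfl hy, hnegY]
      show (3 * 0 ^ 2 + 2 * 0 * 0 + 1 - 0 * 0) / ((0:F) - (0 + 1)) = 1
      have hd : ((0:F) - (0 + 1)) ≠ 0 := fun h => h01 (by linear_combination h)
      rw [div_eq_iff hd]
      linear_combination h2
    have hXv : (Wc F).addX 0 0 1 = 1 := by
      show (1:F) ^ 2 + 0 * 1 - 0 - 0 - 0 = 1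
      ring
    have hX : (Wc F).addX 0 0 ((Wc F).slope 0 0 0 0) = 1 := by rw [hslope]; exact hXv
    have hY : (Wc F).addY 0 0 0 ((Wc F).slope 0 0 0 0) = 0 := by
      rw [WeierstrassCurve.Affine.addY, WeierstrassCurve.Affine.negAddY, hslope, hXv, hnegY]
      linear_combination h2
    rw [hPdef, WeierstrassCurve.Affine.Point.add_self_of_Y_ne hy, hQdef]
    exact some_congr hX hY
  -- Q + Q = R
  have h4P : Q + Q = R := by
    have hy : (0:F) ≠ (Wc F).negY 1 0 := by
      rw [hnegY, zero_add]; exact h01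
    have hslope : (Wc F).slope 1 1 0 0 = 0 := by
      rw [WeierstrassCurve.Affine.slope_of_Y_ne rfl hy]
      rw [div_eq_zero_iff]
      left
      show 3 * (1:F) ^ 2 + 2 * 0 * 1 + 1 - 0 * 0 = 0
      linear_combination 2 * h2
    have hXv : (Wc F).addX 1 1 0 = 0 := by
      show (0:F) ^ 2 + 0 * 0 - 0 - 1 - 1 = 0
      linear_combination -h2
    have hX : (Wc F).addX 1 1 ((Wc F).slope 1 1 0 0) = 0 := by rw [hslope]; exact hXv
    have hY : (Wc F).addY 1 1 0 ((Wc F).slope 1 1 0 0) = 1 := by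
      rw [WeierstrassCurve.Affine.addY, WeierstrassCurve.Affine.negAddY, hslope, hXv, hnegY]
      ring
    rw [hQdef, WeierstrassCurve.Affine.Point.add_self_of_Y_ne hy, hRdef]
    exact some_congr hX hY
  -- R + P = 0
  have h5P : R + P = 0 := by
    rw [hRdef, hPdef]
    exact WeierstrassCurve.Affine.Point.add_of_Y_eq rfl (by rw [hnegY, zero_add])
  -- 5 • P = 0
  have hfive : (5 : ℕ) • P = 0 := by
    have hgrp : (P + P) + ((P + P) + P) = 0 := by
      rw [h2P, ← add_assoc, h4P, h5P]
    rw [← hgrp]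
    abel
  haveI : Fact (Nat.Prime 5) := ⟨by norm_num⟩
  have hPne : P ≠ 0 := WeierstrassCurve.Affine.Point.some_ne_zero hP
  have horder : addOrderOf P = 5 := addOrderOf_eq_prime hfive hPne
  letI : Fintype (Wc F).Point := Fintype.ofEquiv _ (ptEquiv h2).symm
  have hdvd : 5 ∣ Fintype.card (Wc F).Point := horder ▸ addOrderOf_dvd_card
  have hcardpt : Fintype.card (Wc F).Point
      = (univ.filter fun p : F × F => p.2 ^ 2 + p.2 = p.1 ^ 3 + p.1).card + 1 := by
    rw [Fintype.card_congr (ptEquiv h2), Fintype.card_option, Fintype.card_subtype]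
  rwa [hcardpt] at hdvd


lemma pow_period8 (j r : ℕ) : ((2:ZMod 5)) ^ (8 * j + r) = 2 ^ r := by
  rw [pow_add, pow_mul, show ((2:ZMod 5)) ^ 8 = 1 by decide, one_pow, one_mul]

lemma pow_period4 (j s : ℕ) : ((2:ZMod 5)) ^ (4 * j + s) = 2 ^ s := by
  rw [pow_add, pow_mul, show ((2:ZMod 5)) ^ 4 = 1 by decide, one_pow, one_mul]

lemma rhs_dvd (m : ℕ) (hm : Odd m) :
    (5:ℤ) ∣ 2 ^ m + (-1) ^ ((m ^ 2 - 1) / 8) * 2 ^ ((m + 1) / 2) + 1 := by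
  have hodd : m % 2 = 1 := Nat.odd_iff.mp hm
  have hr8 : m % 8 = 1 ∨ m % 8 = 3 ∨ m % 8 = 5 ∨ m % 8 = 7 := by omega
  obtain ⟨j, hj⟩ : ∃ j, m = 8 * j + m % 8 := ⟨m / 8, by omega⟩
  rcases hr8 with hr | hr | hr | hr <;> rw [hr] at hj
  · have hs : (m + 1) / 2 = 4 * j + 1 := by omega
    have hm2 : m ^ 2 = 64 * j ^ 2 + 16 * j + 1 := by subst hj; ring
    have he : (m ^ 2 - 1) / 8 = 8 * j ^ 2 + 2 * j := by omega
    have hsign : ((-1:ℤ)) ^ ((m ^ 2 - 1) / 8) = 1 :=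
      Even.neg_one_pow (he ▸ ⟨4 * j ^ 2 + j, by ring⟩)
    rw [hsign, hs, one_mul, hj]
    apply (ZMod.intCast_zmod_eq_zero_iff_dvd _ 5).mp
    push_cast
    rw [pow_period8, pow_period4]
    decide
  · have hs : (m + 1) / 2 = 4 * j + 2 := by omega
    have hm2 : m ^ 2 = 64 * j ^ 2 + 48 * j + 9 := by subst hj; ring
    have he : (m ^ 2 - 1) / 8 = 8 * j ^ 2 + 6 * j + 1 := by omega
    have hsign : ((-1:ℤ)) ^ ((m ^ 2 - 1) / 8) = -1 :=
      Odd.neg_one_pow (he ▸ ⟨4 * j ^ 2 + 3 * j, by ring⟩)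
    rw [hsign, hs, hj]
    apply (ZMod.intCast_zmod_eq_zero_iff_dvd _ 5).mp
    push_cast
    rw [pow_period8, pow_period4]
    decide
  · have hs : (m + 1) / 2 = 4 * j + 3 := by omega
    have hm2 : m ^ 2 = 64 * j ^ 2 + 80 * j + 25 := by subst hj; ring
    have he : (m ^ 2 - 1) / 8 = 8 * j ^ 2 + 10 * j + 3 := by omega
    have hsign : ((-1:ℤ)) ^ ((m ^ 2 - 1) / 8) = -1 :=
      Odd.neg_one_pow (he ▸ ⟨4 * j ^ 2 + 5 * j + 1, by ring⟩)
    rw [hsign, hs, hj]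
    apply (ZMod.intCast_zmod_eq_zero_iff_dvd _ 5).mp
    push_cast
    rw [pow_period8, pow_period4]
    decide
  · have hs : (m + 1) / 2 = 4 * j + 4 := by omega
    have hm2 : m ^ 2 = 64 * j ^ 2 + 112 * j + 49 := by subst hj; ring
    have he : (m ^ 2 - 1) / 8 = 8 * j ^ 2 + 14 * j + 6 := by omega
    have hsign : ((-1:ℤ)) ^ ((m ^ 2 - 1) / 8) = 1 :=
      Even.neg_one_pow (he ▸ ⟨4 * j ^ 2 + 7 * j + 3, by ring⟩)
    rw [hsign, hs, one_mul, hj]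
    apply (ZMod.intCast_zmod_eq_zero_iff_dvd _ 5).mp
    push_cast
    rw [pow_period8, pow_period4]
    decide

lemma final_arith (m : ℕ) (hm : Odd m) (S : ℤ)
    (hsq : S ^ 2 = 2 ^ (m + 1))
    (hdvd : (5:ℤ) ∣ 2 ^ m + S + 1) :
    S = (-1) ^ ((m ^ 2 - 1) / 8) * 2 ^ ((m + 1) / 2) := by
  set R : ℤ := (-1) ^ ((m ^ 2 - 1) / 8) * 2 ^ ((m + 1) / 2) with hRdef
  have hhalf : (m + 1) / 2 * 2 = m + 1 := by
    have := Nat.odd_iff.mp hm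
    omega
  have hu : ((-1:ℤ) ^ ((m ^ 2 - 1) / 8)) ^ 2 = 1 := by
    rw [← pow_mul, mul_comm, pow_mul]
    norm_num
  have hR2 : R ^ 2 = 2 ^ (m + 1) := by
    rw [hRdef, mul_pow, hu, one_mul, ← pow_mul, hhalf]
  have hfac : (S - R) * (S + R) = 0 := by linear_combination hsq - hR2
  rcases mul_eq_zero.mp hfac with h | h
  · linarith [sub_eq_zero.mp h]
  · exfalso
    have hSR : S = -R := by linarith
    have h5R : (5:ℤ) ∣ 2 * R := by
      have := dvd_sub (rhs_dvd m hm) hdvd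
      rw [← hRdef] at this
      have h2R : 2 ^ m + R + 1 - (2 ^ m + S + 1) = 2 * R := by
        rw [hSR]; ring
      rwa [h2R] at this
    have h5pow : (5:ℤ) ∣ 2 ^ ((m + 1) / 2 + 1) := by
      have h2 : 2 * R * (-1) ^ ((m ^ 2 - 1) / 8) = 2 ^ ((m + 1) / 2 + 1) := by
        rw [hRdef]
        rw [show (2:ℤ) * ((-1) ^ ((m ^ 2 - 1) / 8) * 2 ^ ((m + 1) / 2)) * (-1) ^ ((m ^ 2 - 1) / 8)
          = ((-1) ^ ((m ^ 2 - 1) / 8)) ^ 2 * 2 ^ ((m + 1) / 2 + 1) by ring, hu, one_mul]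
      rw [← h2]
      exact Dvd.dvd.mul_right h5R _
    have hp5 : Prime (5:ℤ) := by norm_num
    have := hp5.dvd_of_dvd_pow h5pow
    norm_num at this


end

end Stmt7Proof

open Finset Stmt7Proof in
theorem stmt7 (m : ℕ) (hm : Odd m)
    (F : Type) [Field F] [Fintype F] [Algebra (ZMod 2) F]
    (hcard : Fintype.card F = 2 ^ m) :
    ∑ x : F, (-1 : ℤ) ^ (Algebra.trace (ZMod 2) F (x ^ 3 + x)).val
      = (-1 : ℤ) ^ ((m ^ 2 - 1) / 8) * 2 ^ ((m + 1) / 2) := by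
  haveI := charF (F := F)
  have h2 : (2 : F) = 0 := by exact_mod_cast CharP.cast_eq_zero F 2
  have h1 := trace_one_f (F := F) m hm hcard
  have hS : ∑ x : F, (-1 : ℤ) ^ (Algebra.trace (ZMod 2) F (x ^ 3 + x)).val
      = ∑ x : F, ch (x ^ 3 + x) := rfl
  rw [hS]
  apply final_arith m hm _ (sq_sum m hm hcard h1 h2)
  have hN := count_N (F := F) m hcard h2 h1
  have hd := ec_dvd (F := F) m hcard h2
  have hd' : (5:ℤ) ∣ (((univ.filter fun p : F × F =>
      p.2 ^ 2 + p.2 = p.1 ^ 3 + p.1).card : ℤ) + 1) := by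
    exact_mod_cast Int.natCast_dvd_natCast.mpr hd
  rw [hN] at hd'
  exact hd'
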